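/- For each integer k ≥ 2 with m = 2^{k−1}+1, the FLDR expected entropy cost (2^k/m)·(ν(2/2^k) + 2ν((2^{k−1}−1)/2^k)) equals 6·(2^{k−1}−1)/(2^{k−1}+1), and hence the FLDR entropy toll, this cost minus H_b(2/m), exceeds 6 − (2k+1)/2^{k−3}. Consequently the supremum over distributions of the FLDR toll is 6. -/

import Mathlib

noncomputable def epsBit (d : ℕ) (x : ℝ) : ℝ := ((⌊2 ^ d * x⌋ % 2 : ℤ) : ℝ)

noncomputable def nu (x : ℝ) : ℝ := ∑' d : ℕ, (d : ℝ) * epsBit d x / 2 ^ d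

noncomputable def binEntropy (p : ℝ) : ℝ :=
  p * Real.logb 2 (1 / p) + (1 - p) * Real.logb 2 (1 / (1 - p))

/-- Expected entropy cost of FLDR for integer weights `a : Fin n → ℕ`
with sum `m` and depth `k = ⌈log₂ m⌉`. -/
noncomputable def fldrCost (n : ℕ) (a : Fin n → ℕ) : ℝ :=
  let m : ℕ := ∑ i, a i
  let k : ℕ := Nat.clog 2 m
  ((2 : ℝ) ^ k / m) *
    (nu ((((2 : ℕ) ^ k - m : ℕ) : ℝ) / 2 ^ k) + ∑ i, nu ((a i : ℝ) / 2 ^ k))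

/-- Shannon entropy of the distribution with integer weights `a`. -/
noncomputable def shEntropy (n : ℕ) (a : Fin n → ℕ) : ℝ :=
  let m : ℕ := ∑ i, a i
  ∑ i, ((a i : ℝ) / m) * Real.logb 2 ((m : ℝ) / a i)

noncomputable def fldrToll (n : ℕ) (a : Fin n → ℕ) : ℝ :=
  fldrCost n a - shEntropy n a


open Finset

lemma nat_bits_sum (j : ℕ) : ∀ K : ℕ, ∑ i ∈ range K, (j / 2^i % 2) * 2^i = j % 2^K := by
  intro K
  induction K with
  | zero => simp [Nat.mod_one]
  | succ K ih =>
    rw [Finset.sum_range_succ, ih, pow_succ, Nat.mod_mul]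
    ring

def Tn (j k : ℕ) : ℕ := ∑ i ∈ Finset.range k, j % 2^(i+1)

lemma nat_id_aux (j : ℕ) : ∀ k : ℕ, ∑ i ∈ range (k+1), (k-i) * (j / 2^i % 2) * 2^i = Tn j k := by
  intro k
  induction k with
  | zero => simp [Tn]
  | succ k ih =>
    have step : ∑ i ∈ range (k+2), (k+1-i) * (j / 2^i % 2) * 2^i
        = (∑ i ∈ range (k+1), (k-i) * (j / 2^i % 2) * 2^i)
          + ∑ i ∈ range (k+1), (j / 2^i % 2) * 2^i := by
      rw [Finset.sum_range_succ]
      have h0 : (k+1-(k+1)) * (j / 2^(k+1) % 2) * 2^(k+1) = 0 := by simp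
      rw [h0, add_zero, ← Finset.sum_add_distrib]
      apply Finset.sum_congr rfl
      intro i hi
      rw [Finset.mem_range] at hi
      have : k + 1 - i = (k - i) + 1 := by omega
      rw [this]; ring
    rw [step, ih, nat_bits_sum, Tn, Tn, Finset.sum_range_succ]

lemma nat_id (j k : ℕ) :
    ∑ d ∈ range (k+1), d * (j / 2^(k-d) % 2) * 2^(k-d) = Tn j k := by
  have h : ∑ d ∈ range (k+1), d * (j / 2^(k-d) % 2) * 2^(k-d)
      = ∑ i ∈ range (k+1), (k-i) * (j / 2^i % 2) * 2^i := by
    rw [← Finset.sum_range_reflect]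
    apply Finset.sum_congr rfl
    intro i hi
    rw [Finset.mem_range] at hi
    have h1 : k + 1 - 1 - i = k - i := by omega
    rw [h1]
    have h2 : k - (k - i) = i := by omega
    rw [h2]
  rw [h, nat_id_aux]

lemma floor_real_nat_div (j n : ℕ) : ⌊(j : ℝ) / (n : ℝ)⌋ = (j / n : ℕ) := by
  rw [← Int.natCast_floor_eq_floor (by positivity), Nat.floor_div_eq_div]

lemma epsBit_dyadic_le (j k d : ℕ) (hd : d ≤ k) :
    epsBit d ((j:ℝ)/2^k) = ((j / 2^(k-d)) % 2 : ℕ) := by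
  unfold epsBit
  have h1 : (2:ℝ)^d * ((j:ℝ)/2^k) = (j:ℝ) / ((2^(k-d) : ℕ) : ℝ) := by
    have hk : (2:ℝ)^k = 2^(k-d) * 2^d := by
      rw [← pow_add]; congr 1; omega
    push_cast
    rw [hk]
    field_simp
  rw [h1, floor_real_nat_div]
  norm_cast

lemma epsBit_dyadic_gt (j k d : ℕ) (hd : k < d) :
    epsBit d ((j:ℝ)/2^k) = 0 := by
  unfold epsBit
  have h1 : (2:ℝ)^d * ((j:ℝ)/2^k) = ((j * 2^(d-k) : ℕ) : ℝ) := by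
    have hk : (2:ℝ)^d = 2^(d-k) * 2^k := by
      rw [← pow_add]; congr 1; omega
    push_cast
    rw [hk]
    field_simp
  rw [h1, Int.floor_natCast]
  have : (2:ℕ) ∣ j * 2^(d-k) := by
    apply Dvd.dvd.mul_left
    exact dvd_pow_self 2 (by omega)
  norm_cast
  omega

lemma nu_dyadic (j k : ℕ) : nu ((j:ℝ)/2^k) = (Tn j k : ℝ) / 2^k := by
  unfold nu
  rw [tsum_eq_sum (s := Finset.range (k+1))
    (by intro d hd
        rw [Finset.mem_range, not_lt] at hd
        rw [epsBit_dyadic_gt j k d (by omega)]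
        simp)]
  rw [← nat_id j k]
  push_cast
  rw [Finset.sum_div]
  apply Finset.sum_congr rfl
  intro d hd
  rw [Finset.mem_range] at hd
  rw [epsBit_dyadic_le j k d (by omega)]
  have h2 : (2:ℝ)^k = 2^(k-d) * 2^d := by
    rw [← pow_add]; congr 1; omega
  rw [h2]
  push_cast
  field_simp

lemma geom_two (L : ℕ) : ∑ i ∈ range L, 2^(i+1) + 2 = 2^(L+1) := by
  induction L with
  | zero => rfl
  | succ L ih => rw [Finset.sum_range_succ]; rw [pow_succ 2 (L+1)]; omega

lemma sum_pred (L : ℕ) : ∑ i ∈ range L, (2^(i+1) - 1) + L = ∑ i ∈ range L, 2^(i+1) := by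
  induction L with
  | zero => rfl
  | succ L ih =>
    rw [Finset.sum_range_succ, Finset.sum_range_succ]
    have : (1:ℕ) ≤ 2^(L+1) := Nat.one_le_two_pow
    omega

lemma Tn_nat_bound (j k : ℕ) (hj : 1 ≤ j) (hjk : j ≤ 2^k) :
    Tn j k + Nat.log 2 j * j + 2 ≤ k * j + 2^(Nat.log 2 j + 1) := by
  set L := Nat.log 2 j with hL
  have hpow : 2^L ≤ j := Nat.pow_log_le_self 2 (by omega)
  have hLk : L ≤ k := by
    have : (2:ℕ)^L ≤ 2^k := le_trans hpow hjk
    exact (Nat.pow_le_pow_iff_right (by norm_num)).mp this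
  have hsplit : Tn j k = (∑ i ∈ range L, j % 2^(i+1)) + ∑ i ∈ Finset.Ico L k, j % 2^(i+1) := by
    unfold Tn
    rw [Finset.range_eq_Ico, ← Finset.sum_Ico_consecutive _ (Nat.zero_le L) hLk, Finset.range_eq_Ico]
  have h1 : ∑ i ∈ range L, j % 2^(i+1) ≤ ∑ i ∈ range L, (2^(i+1) - 1) := by
    apply Finset.sum_le_sum
    intro i _
    have := Nat.mod_lt j (show 0 < 2^(i+1) by positivity)
    omega
  have h1' : ∑ i ∈ range L, (2^(i+1) - 1) + L + 2 ≤ 2^(L+1) := by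
    have := geom_two L
    have hsub := sum_pred L
    omega
  have h2 : ∑ i ∈ Finset.Ico L k, j % 2^(i+1) ≤ (k - L) * j := by
    calc ∑ i ∈ Finset.Ico L k, j % 2^(i+1) ≤ ∑ i ∈ Finset.Ico L k, j := by
          apply Finset.sum_le_sum; intro i _; exact Nat.mod_le j _
      _ = (k - L) * j := by rw [Finset.sum_const, Nat.card_Ico, smul_eq_mul]
  have hexp : ((k-L)+L)*j = (k-L)*j + L*j := add_mul _ _ _
  have hkl : (k - L) + L = k := by omega
  rw [hkl] at hexp
  omega

lemma mul_log_theta {θ : ℝ} (h0 : 0 ≤ θ) (h1 : θ ≤ 1) :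
    (1+θ) * Real.log (1+θ) ≤ 2*θ*Real.log 2 := by
  have hc := Real.convexOn_mul_log
  have h := hc.2 (Set.mem_Ici.mpr (by norm_num : (0:ℝ) ≤ 1))
    (Set.mem_Ici.mpr (by norm_num : (0:ℝ) ≤ 2))
    (by linarith : (0:ℝ) ≤ 1 - θ) h0 (by ring : (1-θ) + θ = 1)
  simp only [smul_eq_mul] at h
  have he : (1-θ)*1 + θ*2 = 1 + θ := by ring
  rw [he] at h
  calc (1+θ) * Real.log (1+θ) ≤ (1-θ)*(1*Real.log 1) + θ*(2*Real.log 2) := h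
    _ = 2*θ*Real.log 2 := by rw [Real.log_one]; ring

lemma key_ineq (j k : ℕ) (hj : 1 ≤ j) (hjk : j ≤ 2^k) :
    (Tn j k : ℝ) ≤ (j:ℝ) * ((k:ℝ) + 2 - Real.logb 2 j) := by
  set L := Nat.log 2 j with hL
  have hpow : (2:ℕ)^L ≤ j := Nat.pow_log_le_self 2 (by omega)
  have hpow2 : j < 2^(L+1) := Nat.lt_pow_succ_log_self (by norm_num) j
  have hnat := Tn_nat_bound j k hj hjk
  -- real versions
  have hjR : (1:ℝ) ≤ (j:ℝ) := by exact_mod_cast hj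
  have hpowR : (2:ℝ)^L ≤ (j:ℝ) := by exact_mod_cast hpow
  have hpow2R : (j:ℝ) ≤ 2^(L+1) := by exact_mod_cast hpow2.le
  -- Step B : j*logb 2 j ≤ L*j + 2*j - 2^(L+1)
  have hlog2pos : (0:ℝ) < Real.log 2 := Real.log_pos (by norm_num)
  have h2Lpos : (0:ℝ) < 2^L := by positivity
  set θ : ℝ := (j:ℝ)/2^L - 1 with hθ
  have hθ0 : 0 ≤ θ := by
    rw [hθ]
    have : (1:ℝ) ≤ (j:ℝ)/2^L := (le_div_iff₀ h2Lpos).mpr (by linarith)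
    linarith
  have hθ1 : θ ≤ 1 := by
    rw [hθ]
    have : (j:ℝ)/2^L ≤ 2 := by
      rw [div_le_iff₀ h2Lpos]
      have : (2:ℝ)^(L+1) = 2^L * 2 := by ring
      linarith [this ▸ hpow2R]
    linarith
  have hjeq : (j:ℝ) = 2^L * (1+θ) := by
    rw [hθ]; field_simp; ring
  have hBkey := mul_log_theta hθ0 hθ1
  have hB : (j:ℝ) * Real.logb 2 (j:ℝ) ≤ L*(j:ℝ) + 2*(j:ℝ) - 2^(L+1) := by
    have hlogj : Real.logb 2 (j:ℝ) = L + Real.logb 2 (1+θ) := by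
      rw [hjeq, Real.logb_mul (by positivity) (by nlinarith), Real.logb_pow]
      norm_num [Real.logb_self_eq_one]
    rw [hlogj, hjeq]
    have expand : (2:ℝ)^L * (1+θ) * ((L:ℝ) + Real.logb 2 (1+θ))
        = (L:ℝ)*(2^L*(1+θ)) + 2^L * ((1+θ) * (Real.log (1+θ)/Real.log 2)) := by
      rw [Real.logb]
      ring
    rw [expand]
    have hstep : (2:ℝ)^L * ((1+θ) * (Real.log (1+θ)/Real.log 2)) ≤ 2^L * (2*θ) := by
      apply mul_le_mul_of_nonneg_left _ (le_of_lt h2Lpos)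
      rw [mul_div_assoc', div_le_iff₀ hlog2pos]
      linarith [hBkey]
    have hend : (2:ℝ)^L * (2*θ) = 2*(2^L*(1+θ)) - 2^(L+1) := by
      rw [pow_succ]; ring
    linarith
  -- Step A from hnat
  have hnatR : (Tn j k : ℝ) + L*(j:ℝ) + 2 ≤ k*(j:ℝ) + 2^(L+1) := by
    exact_mod_cast hnat
  nlinarith [hB, hnatR]

lemma log_two_half : (1/2 : ℝ) ≤ Real.log 2 := by
  have := Real.log_two_gt_d9
  linarith

lemma lemD {z c : ℝ} (hz : 1 ≤ z) (hzc : z ≤ c) :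
    z * (Real.logb 2 (c/z) + 3) ≤ 3*c := by
  have hz0 : 0 < z := by linarith
  have hc0 : 0 < c := by linarith
  have h1 : Real.log (c/z) ≤ c/z - 1 := Real.log_le_sub_one_of_pos (by positivity)
  have h2 : Real.logb 2 (c/z) ≤ 2*(c/z - 1) := by
    rw [Real.logb, div_le_iff₀ (by linarith [log_two_half] : (0:ℝ) < Real.log 2)]
    have hnn : 0 ≤ c/z - 1 := by
      have : 1 ≤ c/z := (one_le_div hz0).mpr hzc
      linarith
    nlinarith [log_two_half]
  have h3 : z * Real.logb 2 (c/z) ≤ 2*c - 2*z := by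
    have := mul_le_mul_of_nonneg_left h2 (le_of_lt hz0)
    calc z * Real.logb 2 (c/z) ≤ z * (2*(c/z-1)) := this
      _ = 2*c - 2*z := by field_simp
  nlinarith

lemma cost_eq (n : ℕ) (a : Fin n → ℕ) (m k : ℕ) (hmdef : (∑ i, a i) = m)
    (hk : Nat.clog 2 m = k) (hm : 1 ≤ m) :
    fldrCost n a = ((Tn (2^k - m) k : ℝ) + ∑ i, (Tn (a i) k : ℝ)) / m := by
  unfold fldrCost
  simp only [hmdef, hk]
  rw [nu_dyadic (2^k - m) k]
  rw [Finset.sum_congr rfl (fun i _ => nu_dyadic (a i) k)]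
  rw [← Finset.sum_div]
  have hmpos : (0:ℝ) < (m:ℝ) := by exact_mod_cast hm
  have h2k : (0:ℝ) < (2:ℝ)^k := by positivity
  field_simp

lemma entropy_eq (n : ℕ) (a : Fin n → ℕ) (m : ℕ) (hmdef : (∑ i, a i) = m)
    (hpos : ∀ i, 0 < a i) :
    shEntropy n a = (1/(m:ℝ)) * ∑ i, (a i : ℝ) * (Real.logb 2 m - Real.logb 2 (a i)) := by
  unfold shEntropy
  simp only [hmdef]
  rw [Finset.mul_sum]
  apply Finset.sum_congr rfl
  intro i _
  by_cases hm0 : m = 0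
  · exfalso
    have := hpos i
    have : a i ≤ m := hmdef ▸ Finset.single_le_sum (f := fun i => a i) (fun i _ => Nat.zero_le _) (Finset.mem_univ i)
    omega
  · rw [Real.logb_div (by exact_mod_cast hm0) (by exact_mod_cast (hpos i).ne')]
    ring

lemma toll_le_six (n : ℕ) (a : Fin n → ℕ) (hpos : ∀ i, 0 < a i) (hm : 1 ≤ ∑ i, a i) :
    fldrToll n a ≤ 6 := by
  set m := ∑ i, a i with hmdef
  set k := Nat.clog 2 m with hk
  have hmk : m ≤ 2^k := Nat.le_pow_clog (by norm_num) m
  have hm2 : 2^(k-1) ≤ m := by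
    rcases eq_or_lt_of_le hm with h1 | h1
    · have : m = 1 := h1.symm
      rw [this]
      simp [hk, this, Nat.clog_one_right]
    · exact le_of_lt (Nat.pow_pred_clog_lt_self (by norm_num) h1)
  have hmpos : (0:ℝ) < (m:ℝ) := by exact_mod_cast hm
  have hai_le : ∀ i, a i ≤ m := fun i =>
    Finset.single_le_sum (f := fun i => a i) (fun i _ => Nat.zero_le _) (Finset.mem_univ i)
  -- bound on Z term
  have hc : ((2:ℝ))^(k-1) ≤ (m:ℝ) := by exact_mod_cast hm2
  have hTZ : (Tn (2^k - m) k : ℝ) ≤ 3 * (m:ℝ) := by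
    by_cases hZ : 2^k - m = 0
    · rw [hZ]
      have hT0 : Tn 0 k = 0 := by unfold Tn; simp
      rw [hT0]
      push_cast
      positivity
    · have hZ1 : 1 ≤ 2^k - m := by omega
      have hk1 : 1 ≤ k := by
        by_contra hk0
        have : k = 0 := by omega
        rw [this] at hZ
        simp at hZ
        omega
      have h2k : (2:ℕ)^k = 2 * 2^(k-1) := by
        conv_lhs => rw [show k = (k-1)+1 by omega]
        ring
      have hZle : 2^k - m ≤ 2^(k-1) := by omega
      have hkey := key_ineq (2^k - m) k hZ1 (by omega)
      have hZR1 : (1:ℝ) ≤ ((2^k - m : ℕ):ℝ) := by exact_mod_cast hZ1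
      have hZRle : ((2^k - m : ℕ):ℝ) ≤ (2:ℝ)^(k-1) := by exact_mod_cast hZle
      have hlogc : Real.logb 2 ((2:ℝ)^(k-1)) = ((k-1 : ℕ):ℝ) := by
        rw [Real.logb_pow]  -- maybe needs adjust
        simp [Real.logb_self_eq_one]
      have harith : (k:ℝ) + 2 - Real.logb 2 ((2^k - m : ℕ):ℝ)
          = Real.logb 2 ((2:ℝ)^(k-1) / ((2^k - m : ℕ):ℝ)) + 3 := by
        rw [Real.logb_div (by positivity) (by linarith), hlogc]
        have : ((k-1:ℕ):ℝ) = (k:ℝ) - 1 := by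
          have : (1:ℕ) ≤ k := hk1
          push_cast [Nat.cast_sub this]
          ring
        rw [this]
        ring
      have := lemD hZR1 (le_trans hZRle (le_refl _))
      calc (Tn (2^k - m) k : ℝ) ≤ ((2^k - m : ℕ):ℝ) * ((k:ℝ) + 2 - Real.logb 2 ((2^k - m : ℕ):ℝ)) := hkey
        _ = ((2^k - m : ℕ):ℝ) * (Real.logb 2 ((2:ℝ)^(k-1) / ((2^k - m : ℕ):ℝ)) + 3) := by rw [harith]
        _ ≤ 3 * (2:ℝ)^(k-1) := lemD hZR1 hZRle
        _ ≤ 3 * (m:ℝ) := by linarith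
  -- bound on a terms
  have hTa : ∀ i, (Tn (a i) k : ℝ) ≤ (a i : ℝ) * ((k:ℝ) + 2 - Real.logb 2 (a i)) := by
    intro i
    exact key_ineq (a i) k (hpos i) (le_trans (hai_le i) hmk)
  -- logb m lower bound
  have hlogm : (k:ℝ) - 1 ≤ Real.logb 2 (m:ℝ) := by
    have h1 : Real.logb 2 ((2:ℝ)^(k-1)) ≤ Real.logb 2 (m:ℝ) := by
      exact Real.logb_le_logb_of_le (by norm_num) (by positivity) hc
    have h2 : ((k-1:ℕ):ℝ) = Real.logb 2 ((2:ℝ)^(k-1)) := by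
      rw [Real.logb_pow]
      simp [Real.logb_self_eq_one]
    have h3 : (k:ℝ) - 1 ≤ ((k-1:ℕ):ℝ) := by
      rcases Nat.eq_zero_or_pos k with h | h
      · simp [h]
      · have : (1:ℕ) ≤ k := h
        push_cast [Nat.cast_sub this]
        ring_nf
        exact le_refl _
    linarith
  -- assemble
  rw [fldrToll, cost_eq n a m k hmdef.symm hk.symm hm, entropy_eq n a m hmdef.symm hpos]
  have hsum : ∑ i, (Tn (a i) k : ℝ) ≤ ∑ i, (a i : ℝ) * ((k:ℝ) + 2 - Real.logb 2 (a i)) :=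
    Finset.sum_le_sum (fun i _ => hTa i)
  have hcombine : ∑ i, (a i : ℝ) * ((k:ℝ) + 2 - Real.logb 2 (a i))
      - ∑ i, (a i : ℝ) * (Real.logb 2 m - Real.logb 2 (a i))
      = (m:ℝ) * ((k:ℝ) + 2 - Real.logb 2 m) := by
    rw [← Finset.sum_sub_distrib]
    have : ∀ i ∈ Finset.univ, (a i : ℝ) * ((k:ℝ) + 2 - Real.logb 2 (a i))
        - (a i : ℝ) * (Real.logb 2 m - Real.logb 2 (a i))
        = (a i : ℝ) * ((k:ℝ) + 2 - Real.logb 2 m) := by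
      intro i _; ring
    rw [Finset.sum_congr rfl this, ← Finset.sum_mul]
    congr 1
    rw [hmdef]
    push_cast
    rfl
  have hfinal : ((k:ℝ) + 2 - Real.logb 2 m) ≤ 3 := by linarith
  have hfinal2 : (m:ℝ) * ((k:ℝ) + 2 - Real.logb 2 m) ≤ 3 * m :=
    by nlinarith
  set E := ∑ i, (a i:ℝ) * (Real.logb 2 m - Real.logb 2 (a i)) with hE
  have hrw : ((Tn (2^k - m) k : ℝ) + ∑ i, (Tn (a i) k : ℝ)) / m - (1/(m:ℝ)) * E
      = (((Tn (2^k - m) k : ℝ) + ∑ i, (Tn (a i) k : ℝ)) - E) / m := by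
    field_simp
  rw [hrw, div_le_iff₀ hmpos]
  nlinarith [hTZ, hsum, hcombine, hfinal2]

lemma mod_pred (a b : ℕ) (ha : 1 ≤ a) (hb : 1 ≤ b) : (a*b - 1) % a = a - 1 := by
  have hb1 : b - 1 + 1 = b := by omega
  have h : a * b = a*(b-1) + a := by
    conv_lhs => rw [← hb1]
    rw [Nat.mul_succ]
  have h2 : a*b - 1 = (a-1) + a*(b-1) := by omega
  rw [h2, Nat.add_mul_mod_self_left, Nat.mod_eq_of_lt (by omega)]

lemma Tn_two (k : ℕ) (hk : 1 ≤ k) : Tn 2 k = 2*(k-1) := by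
  induction k with
  | zero => omega
  | succ k ih =>
    rcases Nat.eq_zero_or_pos k with h | h
    · subst h
      simp [Tn]
    · have ihh := ih h
      unfold Tn at *
      rw [Finset.sum_range_succ, ihh, Nat.mod_eq_of_lt]
      · omega
      · have : 2^2 ≤ 2^(k+1) := Nat.pow_le_pow_right (by norm_num) (by omega)
        omega

lemma Tn_ones (t : ℕ) : Tn (2^t - 1) (t+1) + t + 3 = 3 * 2^t := by
  have h1 : 1 ≤ (2:ℕ)^t := Nat.one_le_two_pow
  have h2 : (2:ℕ)^t - 1 < 2^(t+1) := by
    have : (2:ℕ)^t ≤ 2^(t+1) := Nat.pow_le_pow_right (by norm_num) (by omega)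
    omega
  unfold Tn
  rw [Finset.sum_range_succ, Nat.mod_eq_of_lt h2]
  have hterm : ∀ i ∈ range t, (2^t - 1) % 2^(i+1) = 2^(i+1) - 1 := by
    intro i hi
    rw [Finset.mem_range] at hi
    have : (2:ℕ)^t = 2^(i+1) * 2^(t-i-1) := by
      rw [← pow_add]
      congr 1
      omega
    rw [this]
    exact mod_pred _ _ Nat.one_le_two_pow Nat.one_le_two_pow
  rw [Finset.sum_congr rfl hterm]
  have := sum_pred t
  have := geom_two t
  omega

lemma sq_lt_two_pow : ∀ k : ℕ, 5 ≤ k → k*k < 2^k := by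
  intro k
  induction k with
  | zero => omega
  | succ k ih =>
    intro h
    rcases Nat.lt_or_ge k 5 with h5 | h5
    · interval_cases k <;> simp_all <;> norm_num
    · have := ih h5
      have hk2 : 2^(k+1) = 2^k + 2^k := by rw [pow_succ]; omega
      nlinarith

set_option maxHeartbeats 1000000 in
lemma family_facts (k : ℕ) (hk : 2 ≤ k) :
    fldrCost 2 ![2 ^ (k - 1) - 1, 2] = 6 * ((2:ℝ)^(k-1) - 1) / ((2:ℝ)^(k-1) + 1) ∧
    fldrToll 2 ![2 ^ (k - 1) - 1, 2] > 6 - (2*(k:ℝ)+1) / (2:ℝ)^((k:ℤ) - 3) := by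
  have hc2 : (2:ℕ) ≤ 2^(k-1) := by
    calc (2:ℕ) = 2^1 := rfl
      _ ≤ 2^(k-1) := Nat.pow_le_pow_right (by norm_num) (by omega)
  have h2k : (2:ℕ)^k = 2*2^(k-1) := by
    conv_lhs => rw [show k = (k-1)+1 by omega]
    rw [pow_succ]; ring
  have hsum : (∑ i, (![2^(k-1)-1, 2] : Fin 2 → ℕ) i) = 2^(k-1)+1 := by
    rw [Fin.sum_univ_two]
    simp only [Matrix.cons_val_zero, Matrix.cons_val_one, Matrix.head_cons]
    omega
  have hclog : Nat.clog 2 (2^(k-1)+1) = k := by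
    have hle : 2^(k-1)+1 ≤ 2^k := by omega
    have hlt : (2:ℕ)^(k-1) < 2^(k-1)+1 := by omega
    have h1 : Nat.clog 2 (2^(k-1)+1) ≤ k := (Nat.clog_le_iff_le_pow (by norm_num)).mpr hle
    have h2 : k-1 < Nat.clog 2 (2^(k-1)+1) := (Nat.lt_clog_iff_pow_lt (by norm_num)).mpr hlt
    omega
  have hm1 : 1 ≤ 2^(k-1)+1 := by omega
  have hcost0 := cost_eq 2 ![2^(k-1)-1, 2] (2^(k-1)+1) k hsum hclog hm1
  have hZ : 2^k - (2^(k-1)+1) = 2^(k-1)-1 := by omega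
  rw [hZ] at hcost0
  have hsumT : (∑ i, (Tn ((![2^(k-1)-1, 2] : Fin 2 → ℕ) i) k : ℝ))
      = (Tn (2^(k-1)-1) k : ℝ) + (Tn 2 k : ℝ) := by
    rw [Fin.sum_univ_two]
    simp only [Matrix.cons_val_zero, Matrix.cons_val_one, Matrix.head_cons]
  rw [hsumT] at hcost0
  have hones : Tn (2^(k-1)-1) k + (k-1) + 3 = 3 * 2^(k-1) := by
    have := Tn_ones (k-1)
    rwa [show (k-1)+1 = k by omega] at this
  have htwo : Tn 2 k = 2*(k-1) := Tn_two k (by omega)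
  have hnum : Tn (2^(k-1)-1) k + (Tn (2^(k-1)-1) k + Tn 2 k) = 6*2^(k-1) - 6 := by omega
  set c : ℝ := (2:ℝ)^(k-1) with hc
  have hcR : ((2^(k-1) : ℕ) : ℝ) = c := by push_cast; rfl
  have hc2R : (2:ℝ) ≤ c := by rw [← hcR]; exact_mod_cast hc2
  have hcost : fldrCost 2 ![2^(k-1)-1, 2] = (6*c - 6)/(c+1) := by
    rw [hcost0]
    rw [show (Tn (2^(k-1)-1) k : ℝ) + ((Tn (2^(k-1)-1) k : ℝ) + (Tn 2 k : ℝ))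
        = ((Tn (2^(k-1)-1) k + (Tn (2^(k-1)-1) k + Tn 2 k) : ℕ) : ℝ) by push_cast; ring]
    rw [hnum]
    have h6 : (6:ℕ) ≤ 6*2^(k-1) := by omega
    push_cast [Nat.cast_sub h6]
    rw [hc]
  constructor
  · rw [hcost]; ring_nf
  -- toll part
  have hpos : ∀ i : Fin 2, 0 < (![2^(k-1)-1, 2] : Fin 2 → ℕ) i := by
    intro i
    fin_cases i <;> simp <;> omega
  have hent := entropy_eq 2 ![2^(k-1)-1, 2] (2^(k-1)+1) hsum hpos
  have hsumE : (∑ i, ((![2^(k-1)-1, 2] : Fin 2 → ℕ) i : ℝ) *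
        (Real.logb 2 ((2^(k-1)+1 : ℕ):ℝ) - Real.logb 2 (((![2^(k-1)-1, 2] : Fin 2 → ℕ) i : ℝ))))
      = (c-1) * (Real.logb 2 (c+1) - Real.logb 2 (c-1))
        + 2 * (Real.logb 2 (c+1) - Real.logb 2 2) := by
    rw [Fin.sum_univ_two]
    simp only [Matrix.cons_val_zero, Matrix.cons_val_one, Matrix.head_cons]
    have e1 : ((2^(k-1)-1 : ℕ) : ℝ) = c - 1 := by
      push_cast [Nat.cast_sub (show 1 ≤ 2^(k-1) by omega)]
      rw [hc]
    have e2 : ((2^(k-1)+1 : ℕ) : ℝ) = c + 1 := by push_cast; rw [hc]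
    rw [e1, e2]
    norm_num
  -- bounds
  have hlog2 : (0:ℝ) < Real.log 2 := Real.log_pos (by norm_num)
  have h4 : (0:ℝ) < c - 1 := by linarith
  have hB1 : Real.logb 2 (c+1) - Real.logb 2 (c-1) ≤ 4/(c-1) := by
    rw [← Real.logb_div (by linarith) (by linarith)]
    have h1 : Real.log ((c+1)/(c-1)) ≤ (c+1)/(c-1) - 1 :=
      Real.log_le_sub_one_of_pos (div_pos (by linarith) h4)
    have h2 : (c+1)/(c-1) - 1 = 2/(c-1) := by
      rw [div_sub_one h4.ne']
      congr 1
      ring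
    rw [Real.logb, div_le_iff₀ hlog2]
    have h3 : Real.log ((c+1)/(c-1)) ≤ 2/(c-1) := by linarith
    have h6 : 2/(c-1) ≤ (4*Real.log 2)/(c-1) := by
      gcongr
      linarith [log_two_half]
    have h7 : (4*Real.log 2)/(c-1) = 4/(c-1) * Real.log 2 := by ring
    linarith
  have hlogc : Real.logb 2 c = ((k-1:ℕ):ℝ) := by
    rw [hc, Real.logb_pow]
    simp [Real.logb_self_eq_one]
  have hkm1 : ((k-1:ℕ):ℝ) = (k:ℝ) - 1 := by
    push_cast [Nat.cast_sub (show 1 ≤ k by omega)]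
    ring
  have hB2 : Real.logb 2 (c+1) - Real.logb 2 2 ≤ (k:ℝ) - 1 := by
    have h1 : Real.logb 2 (c+1) ≤ Real.logb 2 (2*c) :=
      Real.logb_le_logb_of_le (by norm_num) (by linarith) (by linarith)
    have h2 : Real.logb 2 (2*c) = 1 + Real.logb 2 c := by
      rw [Real.logb_mul (by norm_num) (by linarith)]
      simp [Real.logb_self_eq_one]
    have h3 : Real.logb 2 (2:ℝ) = 1 := Real.logb_self_eq_one (by norm_num)
    rw [h3]
    rw [h2] at h1
    rw [hkm1] at hlogc
    linarith
  have hmc : ((2^(k-1)+1 : ℕ) : ℝ) = c + 1 := by push_cast; rw [hc]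
  have hcpos : (0:ℝ) < c + 1 := by linarith
  have hHbound : shEntropy 2 ![2^(k-1)-1, 2] ≤ (2*(k:ℝ)+2)/(c+1) := by
    rw [hent, hsumE, hmc]
    have hx : (c-1) * (Real.logb 2 (c+1) - Real.logb 2 (c-1)) ≤ 4 := by
      have := mul_le_mul_of_nonneg_left hB1 (show (0:ℝ) ≤ c-1 by linarith)
      have h4 : (c-1) * (4/(c-1)) = 4 := by field_simp
      linarith
    have hy : 2 * (Real.logb 2 (c+1) - Real.logb 2 2) ≤ 2*((k:ℝ)-1) := by linarith
    rw [one_div, inv_mul_eq_div, div_le_div_iff₀ hcpos hcpos]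
    nlinarith
  have hzpow : (2:ℝ)^((k:ℤ) - 3) = c/4 := by
    rw [zpow_sub₀ (by norm_num : (2:ℝ) ≠ 0), zpow_natCast]
    have : (2:ℝ)^k = 2*c := by
      rw [hc, ← pow_succ']
      congr 1
      omega
    rw [this]
    norm_num
    ring
  rw [fldrToll, hcost, hzpow]
  have hfrac : (6*c-6)/(c+1) = 6 - 12/(c+1) := by
    field_simp
    ring
  rw [hfrac]
  have hEnonneg := hHbound
  have hgoal : 12/(c+1) + (2*(k:ℝ)+2)/(c+1) < (2*(k:ℝ)+1)/(c/4) := by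
    have hrhs : (2*(k:ℝ)+1)/(c/4) = (8*(k:ℝ)+4)/c := by
      rw [div_div_eq_mul_div]
      congr 1
      ring
    rw [hrhs, ← add_div, div_lt_div_iff₀ hcpos (by linarith : (0:ℝ) < c)]
    have hk2 : (2:ℝ) ≤ (k:ℝ) := by exact_mod_cast hk
    have hint : 2*c ≤ (k:ℝ)*c := mul_le_mul_of_nonneg_right hk2 (by linarith)
    nlinarith [hint]
  linarith

theorem fldr_toll_tight :
    (∀ k : ℕ, 2 ≤ k →
      fldrCost 2 ![2 ^ (k - 1) - 1, 2]
        = 6 * ((2 : ℝ) ^ (k - 1) - 1) / ((2 : ℝ) ^ (k - 1) + 1) ∧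
      fldrToll 2 ![2 ^ (k - 1) - 1, 2]
        > 6 - (2 * (k : ℝ) + 1) / (2 : ℝ) ^ ((k : ℤ) - 3)) ∧
    IsLUB {t : ℝ | ∃ (n : ℕ) (a : Fin n → ℕ), (∀ i, 0 < a i) ∧ Finset.univ.gcd a = 1 ∧ t = fldrToll n a} 6 := by
  refine ⟨fun k hk => family_facts k hk, ?_, ?_⟩
  · rintro t ⟨n, a, hpos, hgcd, rfl⟩
    apply toll_le_six n a hpos
    rcases Nat.eq_zero_or_pos n with hn | hn
    · exfalso
      subst hn
      rw [Finset.univ_eq_empty, Finset.gcd_empty] at hgcd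
      exact absurd hgcd (by norm_num)
    · have : 0 < ∑ i, a i :=
        Finset.sum_pos (fun i _ => hpos i) ⟨⟨0, hn⟩, Finset.mem_univ _⟩
      omega
  · intro b hb
    by_contra hlt
    push_neg at hlt
    have hδ : (0:ℝ) < 6 - b := by linarith
    obtain ⟨K, hK⟩ := exists_nat_gt (24/(6-b))
    set k := max K 5 with hkdef
    have hk5 : 5 ≤ k := le_max_right _ _
    have hkK : K ≤ k := le_max_left _ _
    have hk2 : 2 ≤ k := by omega
    have hc2 : (2:ℕ) ≤ 2^(k-1) := by
      calc (2:ℕ) = 2^1 := rfl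
        _ ≤ 2^(k-1) := Nat.pow_le_pow_right (by norm_num) (by omega)
    have hfam := (family_facts k hk2).2
    -- membership
    have hpos' : ∀ i : Fin 2, 0 < (![2^(k-1)-1, 2] : Fin 2 → ℕ) i := by
      intro i; fin_cases i <;> simp <;> omega
    have hgcd' : Finset.univ.gcd (![2^(k-1)-1, 2] : Fin 2 → ℕ) = 1 := by
      set d := Finset.univ.gcd (![2^(k-1)-1, 2] : Fin 2 → ℕ) with hd
      have h0 : d ∣ 2^(k-1)-1 := by
        have := Finset.gcd_dvd (Finset.mem_univ (0 : Fin 2)) (f := (![2^(k-1)-1, 2] : Fin 2 → ℕ))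
        simpa using this
      have h1 : d ∣ 2 := by
        have := Finset.gcd_dvd (Finset.mem_univ (1 : Fin 2)) (f := (![2^(k-1)-1, 2] : Fin 2 → ℕ))
        simpa using this
      rcases (Nat.dvd_prime Nat.prime_two).mp h1 with h | h
      · exact h
      · exfalso
        rw [h] at h0
        obtain ⟨t, ht⟩ := h0
        have heven : (2:ℕ)^(k-1) = 2*2^(k-2) := by
          conv_lhs => rw [show k-1 = (k-2)+1 by omega]
          rw [pow_succ]; ring
        omega
    have hmem : fldrToll 2 ![2^(k-1)-1, 2] ∈
        {t : ℝ | ∃ (n : ℕ) (a : Fin n → ℕ), (∀ i, 0 < a i) ∧ Finset.univ.gcd a = 1 ∧ t = fldrToll n a} :=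
      ⟨2, ![2^(k-1)-1, 2], hpos', hgcd', rfl⟩
    have hle : fldrToll 2 ![2^(k-1)-1, 2] ≤ b := hb hmem
    -- now show (2k+1)/2^(k-3) < 6 - b
    set c : ℝ := (2:ℝ)^(k-1) with hc
    have hcpos : (0:ℝ) < c := by positivity
    have hzpow : (2:ℝ)^((k:ℤ) - 3) = c/4 := by
      rw [zpow_sub₀ (by norm_num : (2:ℝ) ≠ 0), zpow_natCast]
      have h2k : (2:ℝ)^k = 2*c := by
        rw [hc, ← pow_succ']
        congr 1
        omega
      rw [h2k]
      norm_num
      ring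
    have hrhs : (2*(k:ℝ)+1)/(c/4) = (8*(k:ℝ)+4)/c := by
      rw [div_div_eq_mul_div]
      congr 1
      ring
    have hkR : (5:ℝ) ≤ (k:ℝ) := by exact_mod_cast hk5
    have hkpos : (0:ℝ) < (k:ℝ) := by linarith
    have hKpos : (0:ℝ) < (K:ℝ) := by
      have : (0:ℝ) < 24/(6-b) := by positivity
      linarith
    have h24K : (24:ℝ)/K < 6 - b := by
      rw [div_lt_iff₀ hKpos]
      rw [div_lt_iff₀ hδ] at hK
      linarith [hK]
    have h24k : (24:ℝ)/(k:ℝ) ≤ 24/(K:ℝ) := by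
      rw [div_le_div_iff₀ hkpos hKpos]
      have hKk : (K:ℝ) ≤ (k:ℝ) := by exact_mod_cast hkK
      linarith
    have h1' : 24 < (6-b) * (k:ℝ) := by
      have := lt_of_le_of_lt h24k h24K
      rw [div_lt_iff₀ hkpos] at this
      linarith
    have hsq : (k:ℝ)*(k:ℝ) < 2*c := by
      have hn := sq_lt_two_pow k hk5
      have : ((k*k : ℕ):ℝ) < ((2^k : ℕ):ℝ) := by exact_mod_cast hn
      push_cast at this
      have h2k : (2:ℝ)^k = 2*c := by
        rw [hc, ← pow_succ']
        congr 1
        omega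
      rw [h2k] at this
      exact_mod_cast this
    have hX : (2*(k:ℝ)+1)/(2:ℝ)^((k:ℤ) - 3) < 6 - b := by
      rw [hzpow, hrhs, div_lt_iff₀ hcpos]
      have q1 : (6-b)*((k:ℝ)*k) < (6-b)*(2*c) := by
        apply mul_lt_mul_of_pos_left hsq hδ
      have q2 : 24*(k:ℝ) < ((6-b)*k)*k := by
        apply mul_lt_mul_of_pos_right h1' hkpos
      nlinarith
    linarith
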